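/- Hölder-type lower bound used in the metric-graph rearrangement: if w : Γ → [0,∞) is Sobolev on a metric graph Γ of total length L, vanishing at a Dirichlet vertex, and v : [0,L] → ℝ is the monotone increasing rearrangement of w (|{v ≤ τ}| = H¹({w ≤ τ}) for all τ), then ½∫₀^L |v'|² dx - ∫₀^L v dx ≤ ½∫_Γ |w'|² dH¹ - ∫_Γ w dH¹ (one-dimensional Pólya–Szegő inequality on graphs). -/

import Mathlib

open Real MeasureTheory Set intervalIntegral Filter

lemma aux_open_pos {L x : ℝ} (hL : 0 < L) (hx : x ∈ Icc (0:ℝ) L) {U : Set ℝ}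
    (hU : IsOpen U) (hxU : x ∈ U) : 0 < volume (U ∩ Icc (0:ℝ) L) := by
  obtain ⟨ε, hε, hball⟩ := Metric.isOpen_iff.1 hU x hxU
  set c := max (x - ε/2) 0 with hc
  set d := min (x + ε/2) L with hd
  have hcd : c < d := by
    have h1 := hx.1; have h2 := hx.2
    apply max_lt <;> apply lt_min <;> linarith
  have hsub : Ioo c d ⊆ U ∩ Icc (0:ℝ) L := by
    intro y hy
    have h1 : x - ε/2 ≤ c := le_max_left _ _
    have h2 : (0:ℝ) ≤ c := le_max_right _ _
    have h3 : d ≤ x + ε/2 := min_le_left _ _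
    have h4 : d ≤ L := min_le_right _ _
    refine ⟨hball ?_, ⟨by linarith [hy.1], by linarith [hy.2]⟩⟩
    rw [Metric.mem_ball, Real.dist_eq, abs_lt]
    constructor <;> linarith [hy.1, hy.2]
  calc (0:ENNReal) < volume (Ioo c d) := by
        rw [Real.volume_Ioo]; exact ENNReal.ofReal_pos.2 (by linarith)
    _ ≤ _ := measure_mono hsub


lemma v_nonneg {L : ℝ} (hL : 0 < L) {w v : ℝ → ℝ} (hvc : Continuous v)
    (hwpos : ∀ x, 0 ≤ w x)
    (hequi : ∀ τ : ℝ,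
      volume {x ∈ Icc (0 : ℝ) L | v x ≤ τ} = volume {x ∈ Icc (0 : ℝ) L | w x ≤ τ}) :
    ∀ x ∈ Icc (0:ℝ) L, 0 ≤ v x := by
  intro x hx
  by_contra h
  push_neg at h
  have hτ : v x / 2 < 0 := by linarith
  have hw0 : {y ∈ Icc (0:ℝ) L | w y ≤ v x / 2} = ∅ := by
    ext y; simp only [mem_setOf_eq, mem_empty_iff_false, iff_false, not_and]
    intro _; exact not_le.2 (lt_of_lt_of_le hτ (hwpos y))
  have h0 : volume {y ∈ Icc (0:ℝ) L | v y ≤ v x / 2} = 0 := by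
    rw [hequi, hw0, measure_empty]
  have hU : IsOpen (v ⁻¹' Iio (v x / 2)) := (isOpen_Iio).preimage hvc
  have hxU : x ∈ v ⁻¹' Iio (v x / 2) := by simp [Set.mem_preimage]; linarith
  have hpos := aux_open_pos hL hx hU hxU
  have hsub : v ⁻¹' Iio (v x / 2) ∩ Icc (0:ℝ) L ⊆ {y ∈ Icc (0:ℝ) L | v y ≤ v x / 2} := by
    intro y hy; exact ⟨hy.2, le_of_lt hy.1⟩
  have hlt := lt_of_lt_of_le hpos (measure_mono hsub)
  exact absurd h0 hlt.ne'


lemma lt_measure_eq {L : ℝ} {w v : ℝ → ℝ}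
    (hequi : ∀ τ : ℝ,
      volume {x ∈ Icc (0 : ℝ) L | v x ≤ τ} = volume {x ∈ Icc (0 : ℝ) L | w x ≤ τ}) :
    ∀ τ : ℝ, volume {x ∈ Icc (0 : ℝ) L | v x < τ} = volume {x ∈ Icc (0 : ℝ) L | w x < τ} := by
  intro τ
  have key : ∀ f : ℝ → ℝ, {x ∈ Icc (0 : ℝ) L | f x < τ}
      = ⋃ n : ℕ, {x ∈ Icc (0 : ℝ) L | f x ≤ τ - 1/(n+1)} := by
    intro f
    ext x
    simp only [mem_iUnion, mem_setOf_eq]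
    constructor
    · rintro ⟨hx, hfx⟩
      obtain ⟨n, hn⟩ := exists_nat_one_div_lt (show 0 < τ - f x by linarith)
      exact ⟨n, hx, by linarith⟩
    · rintro ⟨n, hx, hfx⟩
      have : (0:ℝ) < 1/(n+1) := by positivity
      exact ⟨hx, by linarith⟩
  have mono : ∀ f : ℝ → ℝ, Monotone (fun n : ℕ => {x ∈ Icc (0 : ℝ) L | f x ≤ τ - 1/(n+1)}) := by
    intro f n m hnm x hx
    refine ⟨hx.1, le_trans hx.2 ?_⟩
    have hc : ((n:ℝ)+1) ≤ (m:ℝ)+1 := by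
      have : (n:ℝ) ≤ (m:ℝ) := Nat.cast_le.2 hnm; linarith
    have h1 : (1:ℝ)/(m+1) ≤ 1/(n+1) := one_div_le_one_div_of_le (by positivity) hc
    linarith
  rw [key v, key w, (mono v).measure_iUnion, (mono w).measure_iUnion]
  congr 1
  ext n
  exact hequi _


lemma lambda_le {L : ℝ} {w v : ℝ → ℝ} (hmono : MonotoneOn v (Icc (0 : ℝ) L))
    (hequi : ∀ τ : ℝ,
      volume {x ∈ Icc (0 : ℝ) L | v x ≤ τ} = volume {x ∈ Icc (0 : ℝ) L | w x ≤ τ})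
    {b : ℝ} (hb : b ∈ Icc (0:ℝ) L) :
    volume {x ∈ Icc (0 : ℝ) L | w x < v b} ≤ ENNReal.ofReal b := by
  rw [← lt_measure_eq hequi]
  have hsub : {x ∈ Icc (0 : ℝ) L | v x < v b} ⊆ Icc (0:ℝ) b := by
    rintro x ⟨hx, hvx⟩
    refine ⟨hx.1, ?_⟩
    by_contra h
    push_neg at h
    exact absurd (hmono hb hx h.le) (not_le.2 hvx)
  calc volume {x ∈ Icc (0 : ℝ) L | v x < v b} ≤ volume (Icc (0:ℝ) b) := measure_mono hsub
    _ = ENNReal.ofReal b := by rw [Real.volume_Icc]; simp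


lemma mu_ge {L : ℝ} {w v : ℝ → ℝ} (hmono : MonotoneOn v (Icc (0 : ℝ) L))
    (hequi : ∀ τ : ℝ,
      volume {x ∈ Icc (0 : ℝ) L | v x ≤ τ} = volume {x ∈ Icc (0 : ℝ) L | w x ≤ τ})
    {a : ℝ} (ha : a ∈ Icc (0:ℝ) L) :
    ENNReal.ofReal a ≤ volume {x ∈ Icc (0 : ℝ) L | w x ≤ v a} := by
  rw [← hequi]
  have hsub : Icc (0:ℝ) a ⊆ {x ∈ Icc (0 : ℝ) L | v x ≤ v a} := by
    rintro x ⟨hx0, hxa⟩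
    exact ⟨⟨hx0, hxa.trans ha.2⟩, hmono ⟨hx0, hxa.trans ha.2⟩ ha hxa⟩
  calc ENNReal.ofReal a = volume (Icc (0:ℝ) a) := by rw [Real.volume_Icc]; simp [ha.1]
    _ ≤ _ := measure_mono hsub

-- measure of the band {t1 < w < t2}

lemma band_le {L : ℝ} {w v : ℝ → ℝ} (hwc : Continuous w)
    (hmono : MonotoneOn v (Icc (0 : ℝ) L))
    (hequi : ∀ τ : ℝ,
      volume {x ∈ Icc (0 : ℝ) L | v x ≤ τ} = volume {x ∈ Icc (0 : ℝ) L | w x ≤ τ})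
    {a b : ℝ} (ha : a ∈ Icc (0:ℝ) L) (hb : b ∈ Icc (0:ℝ) L) (hab : a ≤ b)
    (hv : v a < v b) :
    volume {x ∈ Icc (0 : ℝ) L | v a < w x ∧ w x < v b} ≤ ENNReal.ofReal (b - a) := by
  have hBmeas : MeasurableSet {x ∈ Icc (0 : ℝ) L | w x ≤ v a} :=
    (measurableSet_Icc.inter (hwc.measurable measurableSet_Iic) : MeasurableSet _)
  have hset : {x ∈ Icc (0 : ℝ) L | v a < w x ∧ w x < v b}
      = {x ∈ Icc (0 : ℝ) L | w x < v b} \ {x ∈ Icc (0 : ℝ) L | w x ≤ v a} := by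
    ext x
    simp only [mem_setOf_eq, mem_diff, not_and, not_le]
    constructor
    · rintro ⟨hx, h1, h2⟩; exact ⟨⟨hx, h2⟩, fun _ => h1⟩
    · rintro ⟨⟨hx, h2⟩, h1⟩; exact ⟨hx, h1 hx, h2⟩
  have hBsub : {x ∈ Icc (0 : ℝ) L | w x ≤ v a} ⊆ {x ∈ Icc (0 : ℝ) L | w x < v b} :=
    fun x hx => ⟨hx.1, lt_of_le_of_lt hx.2 hv⟩
  have hfin : volume {x ∈ Icc (0 : ℝ) L | w x ≤ v a} ≠ ⊤ := by
    have : volume {x ∈ Icc (0 : ℝ) L | w x ≤ v a} ≤ volume (Icc (0:ℝ) L) :=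
      measure_mono (fun x hx => hx.1)
    exact (lt_of_le_of_lt this (by rw [Real.volume_Icc]; exact ENNReal.ofReal_lt_top)).ne
  rw [hset, measure_diff hBsub hBmeas.nullMeasurableSet hfin]
  calc volume {x ∈ Icc (0 : ℝ) L | w x < v b} - volume {x ∈ Icc (0 : ℝ) L | w x ≤ v a}
      ≤ ENNReal.ofReal b - ENNReal.ofReal a :=
        tsub_le_tsub (lambda_le hmono hequi hb) (mu_ge hmono hequi ha)
    _ = ENNReal.ofReal (b - a) := (ENNReal.ofReal_sub b ha.1).symm

-- v is bounded by max of w on [0,L]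

lemma v_le_max {L : ℝ} (hL : 0 < L) {w v : ℝ → ℝ} (hvc : Continuous v)
    (hequi : ∀ τ : ℝ,
      volume {x ∈ Icc (0 : ℝ) L | v x ≤ τ} = volume {x ∈ Icc (0 : ℝ) L | w x ≤ τ})
    {p : ℝ} (hp : p ∈ Icc (0:ℝ) L) (hmax : ∀ x ∈ Icc (0:ℝ) L, w x ≤ w p)
    {b : ℝ} (hb : b ∈ Icc (0:ℝ) L) : v b ≤ w p := by
  by_contra h
  push_neg at h
  have hfull : {x ∈ Icc (0 : ℝ) L | w x ≤ w p} = Icc (0:ℝ) L := by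
    ext x; simp only [mem_setOf_eq]
    exact ⟨fun hx => hx.1, fun hx => ⟨hx, hmax x hx⟩⟩
  have hL1 : volume {x ∈ Icc (0 : ℝ) L | v x ≤ w p} = ENNReal.ofReal L := by
    rw [hequi, hfull, Real.volume_Icc]; simp
  have hU : IsOpen (v ⁻¹' Ioi (w p)) := isOpen_Ioi.preimage hvc
  have hxU : b ∈ v ⁻¹' Ioi (w p) := h
  have hpos := aux_open_pos hL hb hU hxU
  set U := v ⁻¹' Ioi (w p) ∩ Icc (0:ℝ) L with hUdef
  have hUmeas : MeasurableSet U := ((isOpen_Ioi.preimage hvc).measurableSet).inter measurableSet_Icc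
  have hsub : {x ∈ Icc (0 : ℝ) L | v x ≤ w p} ⊆ Icc (0:ℝ) L \ U := by
    rintro x ⟨hx, hvx⟩
    exact ⟨hx, fun hxu => absurd hvx (not_le.2 hxu.1)⟩
  have hUsub : U ⊆ Icc (0:ℝ) L := fun x hx => hx.2
  have hUfin : volume U ≠ ⊤ := by
    exact (lt_of_le_of_lt (measure_mono hUsub) (by rw [Real.volume_Icc]; exact ENNReal.ofReal_lt_top)).ne
  have hcalc : volume (Icc (0:ℝ) L \ U) = ENNReal.ofReal L - volume U := by
    rw [measure_diff hUsub hUmeas.nullMeasurableSet hUfin, Real.volume_Icc]; simp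
  have hlt : volume (Icc (0:ℝ) L \ U) < ENNReal.ofReal L := by
    rw [hcalc]
    exact ENNReal.sub_lt_self (by simp) (by simp [ENNReal.ofReal_pos, hL]) hpos.ne'
  exact absurd (hL1 ▸ measure_mono hsub) (not_le.2 hlt)


lemma traversal {w : ℝ → ℝ} (hwc : Continuous w) (hw0 : w 0 = 0)
    {t1 t2 p : ℝ} (ht1 : 0 ≤ t1) (ht12 : t1 < t2) (hp : 0 ≤ p) (hwp : t2 ≤ w p) :
    ∃ α β : ℝ, 0 ≤ α ∧ α < β ∧ β ≤ p ∧ w α = t1 ∧ w β = t2 ∧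
      ∀ x ∈ Ioo α β, t1 < w x ∧ w x < t2 := by
  -- β := first time w reaches t2
  set B := {x ∈ Icc (0:ℝ) p | t2 ≤ w x} with hB
  have hBne : B.Nonempty := ⟨p, ⟨hp, le_refl p⟩, hwp⟩
  have hBclosed : IsClosed B := isClosed_Icc.inter (isClosed_le continuous_const hwc)
  have hBbdd : BddBelow B := ⟨0, fun x hx => hx.1.1⟩
  set β := sInf B with hβ
  have hβB : β ∈ B := hBclosed.csInf_mem hBne hBbdd
  have hβlb : ∀ x ∈ B, β ≤ x := fun x hx => csInf_le hBbdd hx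
  have hwβge : t2 ≤ w β := hβB.2
  have hβ0 : 0 < β := by
    rcases lt_or_eq_of_le hβB.1.1 with h | h
    · exact h
    · exfalso; rw [← h, hw0] at hwβge; linarith
  have hbefore : ∀ x, 0 ≤ x → x < β → w x < t2 := by
    intro x hx0 hxβ
    by_contra hcon
    push_neg at hcon
    exact absurd (hβlb x ⟨⟨hx0, hxβ.le.trans hβB.1.2⟩, hcon⟩) (not_le.2 hxβ)
  have hwβ : w β = t2 := by
    by_contra hne
    have hlt : t2 < w β := lt_of_le_of_ne hwβge (Ne.symm hne)
    have hU : IsOpen (w ⁻¹' Ioi t2) := isOpen_Ioi.preimage hwc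
    obtain ⟨δ, hδ, hball⟩ := Metric.isOpen_iff.1 hU β hlt
    set x := max 0 (β - δ/2) with hx
    have hx0 : 0 ≤ x := le_max_left _ _
    have hxβ : x < β := max_lt hβ0 (by linarith)
    have hxball : x ∈ Metric.ball β δ := by
      rw [Metric.mem_ball, Real.dist_eq, abs_lt]
      have : β - δ/2 ≤ x := le_max_right _ _
      constructor <;> linarith
    exact absurd (hball hxball) (not_lt.2 (hbefore x hx0 hxβ).le)
  -- α := last time before β with w ≤ t1
  set A := {x ∈ Icc (0:ℝ) β | w x ≤ t1} with hA
  have hAne : A.Nonempty := ⟨0, ⟨le_refl 0, hβ0.le⟩, by rw [hw0]; exact ht1⟩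
  have hAclosed : IsClosed A := isClosed_Icc.inter (isClosed_le hwc continuous_const)
  have hAbdd : BddAbove A := ⟨β, fun x hx => hx.1.2⟩
  set α := sSup A with hα
  have hαA : α ∈ A := hAclosed.csSup_mem hAne hAbdd
  have hαub : ∀ x ∈ A, x ≤ α := fun x hx => le_csSup hAbdd hx
  have hα0 : 0 ≤ α := hαA.1.1
  have hαβ : α < β := lt_of_le_of_ne hαA.1.2 (by
    intro h; have h2 := hαA.2; rw [h, hwβ] at h2; linarith)
  have hafter : ∀ x, α < x → x ≤ β → t1 < w x := by
    intro x hαx hxβ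
    by_contra hcon
    push_neg at hcon
    exact absurd (hαub x ⟨⟨hα0.trans hαx.le, hxβ⟩, hcon⟩) (not_le.2 hαx)
  have hwα : w α = t1 := by
    by_contra hne
    have hlt : w α < t1 := lt_of_le_of_ne hαA.2 hne
    have hU : IsOpen (w ⁻¹' Iio t1) := isOpen_Iio.preimage hwc
    obtain ⟨δ, hδ, hball⟩ := Metric.isOpen_iff.1 hU α hlt
    set x := min β (α + δ/2) with hx
    have hxα : α < x := lt_min hαβ (by linarith)
    have hxβ : x ≤ β := min_le_left _ _
    have hxball : x ∈ Metric.ball α δ := by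
      rw [Metric.mem_ball, Real.dist_eq, abs_lt]
      have : x ≤ α + δ/2 := min_le_right _ _
      constructor <;> linarith
    exact absurd (hafter x hxα hxβ) (not_lt.2 (hball hxball).le)
  refine ⟨α, β, hα0, hαβ, hβB.1.2, hwα, hwβ, fun x hx => ⟨hafter x hx.1 hx.2.le, hbefore x (hα0.trans hx.1.le) hx.2⟩⟩


lemma cs_interval {f : ℝ → ℝ} (hf : Continuous f) {a b : ℝ} (hab : a < b) :
    (∫ x in a..b, |f x|)^2 ≤ (b - a) * ∫ x in a..b, (f x)^2 := by
  set I := ∫ x in a..b, |f x| with hI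
  set c := I / (b - a) with hc
  have h1 : IntervalIntegrable (fun x => (f x)^2) volume a b := (hf.pow 2).intervalIntegrable a b
  have h2 : IntervalIntegrable (fun x => |f x|) volume a b := hf.abs.intervalIntegrable a b
  have hexp : ∀ x : ℝ, (|f x| - c)^2 = (f x)^2 - 2*c*|f x| + c^2 := by
    intro x
    have h := sq_abs (f x)
    nlinarith [h]
  have h0 : 0 ≤ ∫ x in a..b, (|f x| - c)^2 :=
    intervalIntegral.integral_nonneg hab.le (fun x _ => sq_nonneg _)
  have hI2 : ∫ x in a..b, (|f x| - c)^2
      = (∫ x in a..b, (f x)^2) - 2*c*I + c^2*(b-a) := by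
    simp only [hexp]
    rw [intervalIntegral.integral_add ((h1.sub ((h2.const_mul (2*c))))) intervalIntegrable_const,
      intervalIntegral.integral_sub h1 (h2.const_mul (2*c)),
      intervalIntegral.integral_const_mul, intervalIntegral.integral_const]
    simp [hI]
    ring
  rw [hI2] at h0
  have hd : 0 < b - a := by linarith
  have hcd : c * (b - a) = I := by rw [hc, div_mul_cancel₀ _ hd.ne']
  nlinarith [sq_nonneg I, h0, hcd]


lemma key_ineq {L : ℝ} (hL : 0 < L) {w v : ℝ → ℝ} (hw : ContDiff ℝ 1 w) (hw0 : w 0 = 0)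
    (hwpos : ∀ x, 0 ≤ w x) (hvc : Continuous v) (hmono : MonotoneOn v (Icc (0 : ℝ) L))
    (hequi : ∀ τ : ℝ,
      volume {x ∈ Icc (0 : ℝ) L | v x ≤ τ} = volume {x ∈ Icc (0 : ℝ) L | w x ≤ τ})
    {y y' : ℝ} (hy : y ∈ Icc (0:ℝ) L) (hy' : y' ∈ Icc (0:ℝ) L) (hyy : y < y') :
    ENNReal.ofReal ((v y' - v y)^2)
      ≤ ENNReal.ofReal (y' - y) *
        ∫⁻ x in {x ∈ Icc (0:ℝ) L | v y < w x ∧ w x < v y'}, ENNReal.ofReal ((deriv w x)^2) := by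
  have hwc : Continuous w := hw.continuous
  have hw' : Continuous (deriv w) := hw.continuous_deriv le_rfl
  rcases le_or_gt (v y') (v y) with hle | ht12
  · have heq : v y = v y' := le_antisymm (hmono hy hy' hyy.le) hle
    simp [heq]
  · set t1 := v y with ht1def
    set t2 := v y' with ht2def
    have ht1 : 0 ≤ t1 := v_nonneg hL hvc hwpos hequi y hy
    obtain ⟨p, hpmem, hpmax⟩ := isCompact_Icc.exists_isMaxOn (⟨0, le_refl 0, hL.le⟩ :
      (Icc (0:ℝ) L).Nonempty) hwc.continuousOn
    have hwp : t2 ≤ w p := v_le_max hL hvc hequi hpmem (fun x hx => hpmax hx) hy'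
    obtain ⟨α, β, hα0, hαβ, hβp, hwα, hwβ, hIoo⟩ := traversal hwc hw0 ht1 ht12 hpmem.1 hwp
    set S := {x ∈ Icc (0:ℝ) L | t1 < w x ∧ w x < t2} with hS
    have hIooS : Ioo α β ⊆ S := by
      intro x hx
      exact ⟨⟨hα0.trans hx.1.le, (hx.2.le.trans hβp).trans hpmem.2⟩, hIoo x hx⟩
    have hvolS : volume S ≤ ENNReal.ofReal (y' - y) :=
      band_le hwc hmono hequi hy hy' hyy.le ht12
    have hβα : β - α ≤ y' - y := by
      have h1 : ENNReal.ofReal (β - α) ≤ ENNReal.ofReal (y' - y) := by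
        calc ENNReal.ofReal (β - α) = volume (Ioo α β) := (Real.volume_Ioo ▸ rfl)
          _ ≤ volume S := measure_mono hIooS
          _ ≤ _ := hvolS
      exact (ENNReal.ofReal_le_ofReal_iff (by linarith)).1 h1
    -- FTC and Cauchy-Schwarz
    have hftc : ∫ x in α..β, deriv w x = t2 - t1 := by
      rw [intervalIntegral.integral_deriv_eq_sub (fun x _ => (hw.differentiable one_ne_zero).differentiableAt)
        (hw'.intervalIntegrable α β), hwα, hwβ]
    have habs : t2 - t1 ≤ ∫ x in α..β, |deriv w x| := by
      calc t2 - t1 = ∫ x in α..β, deriv w x := hftc.symm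
        _ ≤ |∫ x in α..β, deriv w x| := le_abs_self _
        _ ≤ ∫ x in α..β, |deriv w x| :=
            intervalIntegral.abs_integral_le_integral_abs hαβ.le
    set E := ∫ x in α..β, (deriv w x)^2 with hEdef
    have hE0 : 0 ≤ E := intervalIntegral.integral_nonneg hαβ.le (fun x _ => sq_nonneg _)
    have hcs : (t2 - t1)^2 ≤ (β - α) * E :=
      le_trans (pow_le_pow_left₀ (by linarith) habs 2) (cs_interval hw' hαβ)
    have hkey : (t2 - t1)^2 ≤ (y' - y) * E :=
      le_trans hcs (mul_le_mul_of_nonneg_right hβα hE0)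
    calc ENNReal.ofReal ((t2 - t1)^2) ≤ ENNReal.ofReal ((y' - y) * E) :=
          ENNReal.ofReal_le_ofReal hkey
      _ = ENNReal.ofReal (y' - y) * ENNReal.ofReal E := ENNReal.ofReal_mul (by linarith)
      _ = ENNReal.ofReal (y' - y) * ∫⁻ x in Ioc α β, ENNReal.ofReal ((deriv w x)^2) := by
          congr 1
          have hint : IntegrableOn (fun x => (deriv w x)^2) (Ioc α β) volume :=
            ((hw'.pow 2).integrableOn_Icc).mono_set Ioc_subset_Icc_self
          rw [hEdef, intervalIntegral.integral_of_le hαβ.le]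
          exact ofReal_integral_eq_lintegral_ofReal hint
            (Filter.Eventually.of_forall (fun x => sq_nonneg _))
      _ = ENNReal.ofReal (y' - y) * ∫⁻ x in Ioo α β, ENNReal.ofReal ((deriv w x)^2) := by
          congr 1
          exact (setLIntegral_congr (Ioo_ae_eq_Ioc (a := α) (b := β))).symm
      _ ≤ ENNReal.ofReal (y' - y) * ∫⁻ x in S, ENNReal.ofReal ((deriv w x)^2) :=
          mul_le_mul_right (lintegral_mono_set hIooS) _


lemma diam_le {L ε c : ℝ} (hε : 0 < ε) {v : ℝ → ℝ}
    (hmono : MonotoneOn v (Icc (0:ℝ) L)) :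
    volume {y ∈ Icc (0:ℝ) (L-ε) | v y < c ∧ c < v (y+ε)} ≤ ENNReal.ofReal ε := by
  set T := {y ∈ Icc (0:ℝ) (L-ε) | v y < c ∧ c < v (y+ε)} with hT
  rcases T.eq_empty_or_nonempty with h | hne
  · rw [h]; simp
  · have hbdd : BddBelow T := ⟨0, fun y hy => hy.1.1⟩
    set m := sInf T with hm
    have hkey : ∀ y ∈ T, ∀ y' ∈ T, y < y' + ε := by
      intro y hy y' hy'
      by_contra hcon
      push_neg at hcon
      have h1 : y' + ε ∈ Icc (0:ℝ) L := ⟨by linarith [hy'.1.1], by linarith [hy'.1.2]⟩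
      have h2 : y ∈ Icc (0:ℝ) L := ⟨hy.1.1, by linarith [hy.1.2]⟩
      have := hmono h1 h2 hcon
      linarith [hy.2.1, hy'.2.2]
    have hsub : T ⊆ Icc m (m + ε) := by
      intro y hy
      refine ⟨csInf_le hbdd hy, ?_⟩
      have : y - ε ≤ m := le_csInf hne (fun y' hy' => by linarith [hkey y hy y' hy'])
      linarith
    calc volume T ≤ volume (Icc m (m+ε)) := measure_mono hsub
      _ = ENNReal.ofReal ε := by rw [Real.volume_Icc]; ring_nf


lemma energy_bound {L : ℝ} (hL : 0 < L) {w v : ℝ → ℝ} (hw : ContDiff ℝ 1 w) (hw0 : w 0 = 0)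
    (hwpos : ∀ x, 0 ≤ w x) (hv : Differentiable ℝ v) (hmono : MonotoneOn v (Icc (0 : ℝ) L))
    (hequi : ∀ τ : ℝ,
      volume {x ∈ Icc (0 : ℝ) L | v x ≤ τ} = volume {x ∈ Icc (0 : ℝ) L | w x ≤ τ})
    (n : ℕ) :
    ∫⁻ y in Icc (0:ℝ) (L - 1/((n:ℝ)+1)),
        ENNReal.ofReal ((((n:ℝ)+1) * (v (y + 1/((n:ℝ)+1)) - v y))^2)
      ≤ ∫⁻ x in Icc (0:ℝ) L, ENNReal.ofReal ((deriv w x)^2) := by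
  have hwc : Continuous w := hw.continuous
  have hvc : Continuous v := hv.continuous
  set N : ℝ := (n:ℝ)+1 with hNdef
  have hN : 0 < N := by positivity
  set ε : ℝ := 1/N with hεdef
  have hε : 0 < ε := by positivity
  have hNε : N * ε = 1 := by rw [hεdef]; field_simp
  set c : ℝ → ENNReal := fun x => ENNReal.ofReal ((deriv w x)^2) with hcdef
  have hcmeas : Measurable c :=
    ENNReal.measurable_ofReal.comp ((measurable_deriv w).pow_const 2)
  set Φ : ℝ → ℝ → ENNReal :=
    fun y x => Set.indicator {x | v y < w x ∧ w x < v (y+ε)} c x with hΦdef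
  have hΦunc : Function.uncurry Φ =
      Set.indicator {q : ℝ × ℝ | v q.1 < w q.2 ∧ w q.2 < v (q.1+ε)} (fun q => c q.2) := by
    funext q
    rcases q with ⟨y, x⟩
    simp only [Function.uncurry, Set.indicator_apply, mem_setOf_eq, hΦdef]
  have hAopen : IsOpen {q : ℝ × ℝ | v q.1 < w q.2 ∧ w q.2 < v (q.1+ε)} := by
    have h1 : IsOpen {q : ℝ × ℝ | v q.1 < w q.2} :=
      isOpen_lt (hvc.comp continuous_fst) (hwc.comp continuous_snd)
    have h2 : IsOpen {q : ℝ × ℝ | w q.2 < v (q.1+ε)} :=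
      isOpen_lt (hwc.comp continuous_snd)
        (hvc.comp ((continuous_fst.add continuous_const)))
    exact h1.inter h2
  have hΦmeas : Measurable (Function.uncurry Φ) := by
    rw [hΦunc]
    exact (hcmeas.comp measurable_snd).indicator hAopen.measurableSet
  -- Step 1: pointwise bound
  have step1 : ∀ y ∈ Icc (0:ℝ) (L-ε),
      ENNReal.ofReal ((N * (v (y+ε) - v y))^2)
        ≤ ENNReal.ofReal N * ∫⁻ x in Icc (0:ℝ) L, Φ y x := by
    intro y hy
    have hy1 : y ∈ Icc (0:ℝ) L := ⟨hy.1, by linarith [hy.2]⟩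
    have hy2 : y + ε ∈ Icc (0:ℝ) L := ⟨by linarith [hy.1], by linarith [hy.2]⟩
    have hkey := key_ineq hL hw hw0 hwpos hvc hmono hequi hy1 hy2 (by linarith)
    have hTmeas : MeasurableSet {x | v y < w x ∧ w x < v (y+ε)} := by
      have h1 : IsOpen {x | v y < w x} := isOpen_lt continuous_const hwc
      have h2 : IsOpen {x | w x < v (y+ε)} := isOpen_lt hwc continuous_const
      exact (h1.inter h2).measurableSet
    have hrw : ∫⁻ x in Icc (0:ℝ) L, Φ y x
        = ∫⁻ x in {x ∈ Icc (0:ℝ) L | v y < w x ∧ w x < v (y+ε)}, c x := by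
      rw [hΦdef]
      rw [lintegral_indicator hTmeas, Measure.restrict_restrict hTmeas]
      have hs : {x | v y < w x ∧ w x < v (y+ε)} ∩ Icc (0:ℝ) L
          = {x ∈ Icc (0:ℝ) L | v y < w x ∧ w x < v (y+ε)} := by
        ext x; simp only [mem_inter_iff, mem_setOf_eq]; tauto
      rw [hs]
    have harith : ENNReal.ofReal ((N * (v (y+ε) - v y))^2)
        = ENNReal.ofReal (N^2) * ENNReal.ofReal ((v (y+ε) - v y)^2) := by
      rw [← ENNReal.ofReal_mul (sq_nonneg N)]
      congr 1
      ring
    have hfix : y + ε - y = ε := by ring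
    calc ENNReal.ofReal ((N * (v (y+ε) - v y))^2)
        = ENNReal.ofReal (N^2) * ENNReal.ofReal ((v (y+ε) - v y)^2) := harith
      _ ≤ ENNReal.ofReal (N^2) * (ENNReal.ofReal (y + ε - y) *
            ∫⁻ x in {x ∈ Icc (0:ℝ) L | v y < w x ∧ w x < v (y+ε)}, c x) :=
          mul_le_mul_right hkey _
      _ = ENNReal.ofReal N * ∫⁻ x in {x ∈ Icc (0:ℝ) L | v y < w x ∧ w x < v (y+ε)}, c x := by
          rw [hfix, ← mul_assoc, ← ENNReal.ofReal_mul (sq_nonneg N)]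
          congr 2
          rw [sq]
          rw [mul_assoc, hNε, mul_one]
      _ = ENNReal.ofReal N * ∫⁻ x in Icc (0:ℝ) L, Φ y x := by rw [hrw]
  -- Step 4: inner y-integral bound
  have step4 : ∀ x : ℝ, ∫⁻ y in Icc (0:ℝ) (L-ε), Φ y x ≤ c x * ENNReal.ofReal ε := by
    intro x
    have hcond : MeasurableSet {y : ℝ | v y < w x ∧ w x < v (y+ε)} := by
      have h1 : IsOpen {y : ℝ | v y < w x} := isOpen_lt hvc continuous_const
      have h2 : IsOpen {y : ℝ | w x < v (y+ε)} :=
        isOpen_lt continuous_const (hvc.comp (continuous_id.add continuous_const))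
      exact (h1.inter h2).measurableSet
    have heq : (fun y => Φ y x)
        = Set.indicator {y : ℝ | v y < w x ∧ w x < v (y+ε)} (fun _ => c x) := by
      funext y
      simp only [hΦdef, Set.indicator_apply, mem_setOf_eq]
    rw [heq, lintegral_indicator hcond, Measure.restrict_restrict hcond,
      setLIntegral_const]
    have hsets : {y : ℝ | v y < w x ∧ w x < v (y+ε)} ∩ Icc (0:ℝ) (L-ε)
        = {y ∈ Icc (0:ℝ) (L-ε) | v y < w x ∧ w x < v (y+ε)} := by
      ext y; simp only [mem_inter_iff, mem_setOf_eq]; tauto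
    rw [hsets]
    exact mul_le_mul_right (diam_le hε hmono) _
  -- combine
  calc ∫⁻ y in Icc (0:ℝ) (L-ε), ENNReal.ofReal ((N * (v (y+ε) - v y))^2)
      ≤ ∫⁻ y in Icc (0:ℝ) (L-ε), ENNReal.ofReal N * ∫⁻ x in Icc (0:ℝ) L, Φ y x :=
        setLIntegral_mono ((measurable_const.mul
          (hΦmeas.lintegral_prod_right))) step1
    _ = ENNReal.ofReal N * ∫⁻ y in Icc (0:ℝ) (L-ε), ∫⁻ x in Icc (0:ℝ) L, Φ y x :=
        lintegral_const_mul' _ _ ENNReal.ofReal_ne_top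
    _ = ENNReal.ofReal N * ∫⁻ x in Icc (0:ℝ) L, ∫⁻ y in Icc (0:ℝ) (L-ε), Φ y x := by
        rw [lintegral_lintegral_swap hΦmeas.aemeasurable]
    _ ≤ ENNReal.ofReal N * ∫⁻ x in Icc (0:ℝ) L, c x * ENNReal.ofReal ε :=
        mul_le_mul_right (lintegral_mono_ae (Filter.Eventually.of_forall (fun x => step4 x))) _
    _ = ENNReal.ofReal N * ((∫⁻ x in Icc (0:ℝ) L, c x) * ENNReal.ofReal ε) := by
        rw [lintegral_mul_const' _ _ ENNReal.ofReal_ne_top]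
    _ = (ENNReal.ofReal N * ENNReal.ofReal ε) * ∫⁻ x in Icc (0:ℝ) L, c x := by ring
    _ = ∫⁻ x in Icc (0:ℝ) L, c x := by
        rw [← ENNReal.ofReal_mul hN.le, hNε]
        simp


lemma energy_le {L : ℝ} (hL : 0 < L) {w v : ℝ → ℝ} (hw : ContDiff ℝ 1 w) (hw0 : w 0 = 0)
    (hwpos : ∀ x, 0 ≤ w x) (hv : Differentiable ℝ v) (hmono : MonotoneOn v (Icc (0 : ℝ) L))
    (hequi : ∀ τ : ℝ,
      volume {x ∈ Icc (0 : ℝ) L | v x ≤ τ} = volume {x ∈ Icc (0 : ℝ) L | w x ≤ τ}) :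
    ∫ x in (0:ℝ)..L, (deriv v x)^2 ≤ ∫ x in (0:ℝ)..L, (deriv w x)^2 := by
  have hw' : Continuous (deriv w) := hw.continuous_deriv le_rfl
  set C := ∫ x in (0:ℝ)..L, (deriv w x)^2 with hCdef
  have hC0 : 0 ≤ C := intervalIntegral.integral_nonneg hL.le (fun x _ => sq_nonneg _)
  have hCl : ∫⁻ x in Icc (0:ℝ) L, ENNReal.ofReal ((deriv w x)^2) = ENNReal.ofReal C := by
    rw [hCdef, intervalIntegral.integral_of_le hL.le]
    rw [← setLIntegral_congr (Ioc_ae_eq_Icc (μ := volume) (a := (0:ℝ)) (b := L))]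
    exact (ofReal_integral_eq_lintegral_ofReal
      ((hw'.pow 2).integrableOn_Icc.mono_set Ioc_subset_Icc_self)
      (Filter.Eventually.of_forall (fun x => sq_nonneg _))).symm
  set f : ℕ → ℝ → ENNReal := fun n y =>
    Set.indicator (Icc (0:ℝ) (L - 1/((n:ℝ)+1)))
      (fun y => ENNReal.ofReal ((((n:ℝ)+1) * (v (y + 1/((n:ℝ)+1)) - v y))^2)) y with hfdef
  have hfmeas : ∀ n, Measurable (f n) := by
    intro n
    apply Measurable.indicator _ measurableSet_Icc
    apply ENNReal.measurable_ofReal.comp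
    exact ((continuous_const.mul ((hv.continuous.comp
      (continuous_id.add continuous_const)).sub hv.continuous)).pow 2).measurable
  have hfbound : ∀ n, ∫⁻ y, f n y ≤ ENNReal.ofReal C := by
    intro n
    rw [hfdef]
    rw [lintegral_indicator measurableSet_Icc]
    rw [← hCl]
    exact energy_bound hL hw hw0 hwpos hv hmono hequi n
  have hliminf : ∀ y ∈ Ioo (0:ℝ) L,
      ENNReal.ofReal ((deriv v y)^2) ≤ liminf (fun n => f n y) atTop := by
    intro y hy
    -- slopes converge to the derivative
    have hder : HasDerivAt v (deriv v y) y := (hv y).hasDerivAt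
    have hslope := hasDerivAt_iff_tendsto_slope.1 hder
    have hseq : Tendsto (fun n : ℕ => y + 1/((n:ℝ)+1)) atTop (nhdsWithin y {y}ᶜ) := by
      apply tendsto_nhdsWithin_of_tendsto_nhds_of_eventually_within
      · have := tendsto_one_div_add_atTop_nhds_zero_nat (𝕜 := ℝ)
        have h2 := this.const_add y
        simpa using h2
      · apply Filter.Eventually.of_forall
        intro n
        have : (0:ℝ) < 1/((n:ℝ)+1) := by positivity
        simp only [mem_compl_iff, mem_singleton_iff]
        intro h
        nlinarith [congrArg (fun t => t - y) h]
    have hterm : Tendsto (fun n : ℕ => ((n:ℝ)+1) * (v (y + 1/((n:ℝ)+1)) - v y)) atTop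
        (nhds (deriv v y)) := by
      have hcomp := hslope.comp hseq
      apply hcomp.congr
      intro n
      have hne : (0:ℝ) < 1/((n:ℝ)+1) := by positivity
      rw [Function.comp_apply, slope_def_field]
      field_simp
      ring
    have htend2 : Tendsto (fun n : ℕ =>
        ENNReal.ofReal ((((n:ℝ)+1) * (v (y + 1/((n:ℝ)+1)) - v y))^2)) atTop
        (nhds (ENNReal.ofReal ((deriv v y)^2))) :=
      (ENNReal.continuous_ofReal.tendsto _).comp (hterm.pow 2)
    have hev : (fun n : ℕ =>
        ENNReal.ofReal ((((n:ℝ)+1) * (v (y + 1/((n:ℝ)+1)) - v y))^2)) =ᶠ[atTop]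
        (fun n => f n y) := by
      obtain ⟨N, hN⟩ := exists_nat_one_div_lt (show (0:ℝ) < L - y by linarith [hy.2])
      refine Filter.eventually_atTop.2 ⟨N, fun n hn => ?_⟩
      have h1 : 1/((n:ℝ)+1) ≤ 1/((N:ℝ)+1) := by
        apply one_div_le_one_div_of_le (by positivity)
        have : (N:ℝ) ≤ (n:ℝ) := Nat.cast_le.2 hn
        linarith
      have hmem : y ∈ Icc (0:ℝ) (L - 1/((n:ℝ)+1)) :=
        ⟨hy.1.le, by linarith⟩
      show _ = f n y
      rw [hfdef]
      exact (Set.indicator_of_mem hmem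
        (fun y => ENNReal.ofReal ((((n:ℝ)+1) * (v (y + 1/((n:ℝ)+1)) - v y))^2))).symm
    have htend3 : Tendsto (fun n => f n y) atTop (nhds (ENNReal.ofReal ((deriv v y)^2))) :=
      htend2.congr' hev
    exact le_of_eq (htend3.liminf_eq).symm
  have main : ∫⁻ y in Ioo (0:ℝ) L, ENNReal.ofReal ((deriv v y)^2) ≤ ENNReal.ofReal C := by
    calc ∫⁻ y in Ioo (0:ℝ) L, ENNReal.ofReal ((deriv v y)^2)
        ≤ ∫⁻ y in Ioo (0:ℝ) L, liminf (fun n => f n y) atTop :=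
          setLIntegral_mono (Measurable.liminf hfmeas) hliminf
      _ ≤ liminf (fun n => ∫⁻ y in Ioo (0:ℝ) L, f n y) atTop :=
          lintegral_liminf_le hfmeas
      _ ≤ liminf (fun _ : ℕ => ENNReal.ofReal C) atTop := by
          refine Filter.liminf_le_liminf (Filter.Eventually.of_forall
            (fun n => le_trans (setLIntegral_le_lintegral _ _) (hfbound n))) ?_ ?_ <;>
            isBoundedDefault
      _ = ENNReal.ofReal C := Filter.liminf_const _
  -- convert back to interval integral
  have hmeasv : Measurable (fun y => (deriv v y)^2) := (measurable_deriv v).pow_const 2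
  have hnn : (0:ℝ → ℝ) ≤ᶠ[ae (volume.restrict (Ioo (0:ℝ) L))] (fun y => (deriv v y)^2) :=
    Filter.Eventually.of_forall (fun x => sq_nonneg _)
  have hint : ∫ y in Ioo (0:ℝ) L, (deriv v y)^2
      = (∫⁻ y in Ioo (0:ℝ) L, ENNReal.ofReal ((deriv v y)^2)).toReal :=
    integral_eq_lintegral_of_nonneg_ae hnn hmeasv.aestronglyMeasurable
  have hfin : ∫ y in Ioo (0:ℝ) L, (deriv v y)^2 ≤ C := by
    rw [hint]
    calc (∫⁻ y in Ioo (0:ℝ) L, ENNReal.ofReal ((deriv v y)^2)).toReal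
        ≤ (ENNReal.ofReal C).toReal := ENNReal.toReal_mono ENNReal.ofReal_ne_top main
      _ = C := ENNReal.toReal_ofReal hC0
  calc ∫ x in (0:ℝ)..L, (deriv v x)^2
      = ∫ y in Ioo (0:ℝ) L, (deriv v y)^2 := by
        rw [intervalIntegral.integral_of_le hL.le, integral_Ioc_eq_integral_Ioo]
    _ ≤ C := hfin


lemma mass_eq {L : ℝ} (hL : 0 < L) {w v : ℝ → ℝ} (hwc : Continuous w) (hvc : Continuous v)
    (hwpos : ∀ x, 0 ≤ w x) (hvnn : ∀ x ∈ Icc (0:ℝ) L, 0 ≤ v x)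
    (hequi : ∀ τ : ℝ,
      volume {x ∈ Icc (0 : ℝ) L | v x ≤ τ} = volume {x ∈ Icc (0 : ℝ) L | w x ≤ τ}) :
    ∫ x in (0:ℝ)..L, v x = ∫ x in (0:ℝ)..L, w x := by
  set μ := volume.restrict (Icc (0:ℝ) L) with hμ
  have hIccFin : volume (Icc (0:ℝ) L) ≠ ⊤ := by
    rw [Real.volume_Icc]; exact ENNReal.ofReal_ne_top
  have hclaim : ∀ t : ℝ, μ {a | t < v a} = μ {a | t < w a} := by
    intro t
    have hmv : MeasurableSet {a : ℝ | t < v a} := (isOpen_lt continuous_const hvc).measurableSet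
    have hmw : MeasurableSet {a : ℝ | t < w a} := (isOpen_lt continuous_const hwc).measurableSet
    have hmv' : MeasurableSet {a : ℝ | v a ≤ t} := (isClosed_le hvc continuous_const).measurableSet
    have hmw' : MeasurableSet {a : ℝ | w a ≤ t} := (isClosed_le hwc continuous_const).measurableSet
    rw [hμ, Measure.restrict_apply hmv, Measure.restrict_apply hmw]
    have hsplit : ∀ f : ℝ → ℝ, MeasurableSet {a : ℝ | f a ≤ t} →
        volume ({x | x ∈ Icc (0:ℝ) L ∧ f x ≤ t}) + volume ({a : ℝ | t < f a} ∩ Icc (0:ℝ) L)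
          = volume (Icc (0:ℝ) L) := by
      intro f hm
      have h1 : {x | x ∈ Icc (0:ℝ) L ∧ f x ≤ t} = Icc (0:ℝ) L ∩ {a | f a ≤ t} := by
        ext x; simp only [mem_inter_iff, mem_setOf_eq]
      have h2 : {a : ℝ | t < f a} ∩ Icc (0:ℝ) L = Icc (0:ℝ) L \ {a | f a ≤ t} := by
        ext x; simp only [mem_inter_iff, mem_diff, mem_setOf_eq, not_le]; tauto
      rw [h1, h2]
      exact measure_inter_add_diff _ hm
    have hv_eq := hsplit v hmv'
    have hw_eq := hsplit w hmw'
    have heq := hequi t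
    have hfin : volume ({x | x ∈ Icc (0:ℝ) L ∧ v x ≤ t}) ≠ ⊤ := by
      refine ne_top_of_le_ne_top hIccFin (measure_mono (fun x hx => hx.1))
    rw [heq] at hv_eq
    rw [← hw_eq] at hv_eq
    exact (ENNReal.add_right_inj (heq ▸ hfin)).1 hv_eq
  have hvint : Integrable v μ := hvc.integrableOn_Icc
  have hwint : Integrable w μ := hwc.integrableOn_Icc
  have hvnn' : 0 ≤ᶠ[ae μ] v :=
    (ae_restrict_iff' measurableSet_Icc).2 (Filter.Eventually.of_forall hvnn)
  have hwnn' : 0 ≤ᶠ[ae μ] w := Filter.Eventually.of_forall hwpos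
  have h1 := hvint.integral_eq_integral_meas_lt hvnn'
  have h2 := hwint.integral_eq_integral_meas_lt hwnn'
  have h3 : ∫ x, v x ∂μ = ∫ x, w x ∂μ := by
    rw [h1, h2]
    congr 1
    funext t
    rw [measureReal_def, measureReal_def, hclaim t]
  calc ∫ x in (0:ℝ)..L, v x = ∫ x in Icc (0:ℝ) L, v x := by
        rw [intervalIntegral.integral_of_le hL.le, integral_Icc_eq_integral_Ioc]
    _ = ∫ x in Icc (0:ℝ) L, w x := h3
    _ = ∫ x in (0:ℝ)..L, w x := by
        rw [intervalIntegral.integral_of_le hL.le, integral_Icc_eq_integral_Ioc]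

/-- One-dimensional Pólya–Szegő inequality for the monotone increasing
rearrangement (single-interval metric graph of total length `L`): if
`w ≥ 0` vanishes at the Dirichlet vertex `0` and `v : [0,L] → ℝ` is the
monotone increasing rearrangement of `w` (equimeasurable:
`|{v ≤ τ}| = |{w ≤ τ}|` for every `τ`), then
`½∫₀^L |v'|² - ∫₀^L v ≤ ½∫₀^L |w'|² - ∫₀^L w`. -/
theorem polya_szego_graph (L : ℝ) (hL : 0 < L) (w v : ℝ → ℝ)
    (hw : ContDiff ℝ 1 w) (hw0 : w 0 = 0) (hwpos : ∀ x, 0 ≤ w x)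
    (hv : Differentiable ℝ v) (hmono : MonotoneOn v (Icc (0 : ℝ) L))
    (hequi : ∀ τ : ℝ,
      volume {x ∈ Icc (0 : ℝ) L | v x ≤ τ} = volume {x ∈ Icc (0 : ℝ) L | w x ≤ τ}) :
    (1 / 2) * (∫ x in (0 : ℝ)..L, (deriv v x) ^ 2) - (∫ x in (0 : ℝ)..L, v x)
      ≤ (1 / 2) * (∫ x in (0 : ℝ)..L, (deriv w x) ^ 2) -
          (∫ x in (0 : ℝ)..L, w x) := by
  have hvc : Continuous v := hv.continuous
  have hE := energy_le hL hw hw0 hwpos hv hmono hequi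
  have hM := mass_eq hL hw.continuous hvc hwpos (v_nonneg hL hvc hwpos hequi) hequi
  linarith
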